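/- Every edge of weight 1 is accepted by Ranked Pairs: if all n voters rank τ before τ', then the Ranked Pairs output order places τ before τ'. -/

import Mathlib

/-- The fraction of the `n` voters (each voter `i` ranking transactions by the
injective rank function `rank i`) that rank `a` before `b`. -/
def voteWeight {V : Type*} (n : ℕ) (rank : Fin n → V → ℕ) (a b : V) : ℚ :=
  ((Finset.univ.filter (fun i : Fin n => rank i a < rank i b)).card : ℚ) / n

/-- A set `H` of directed edges has a directed cycle. -/
def hasCycle {V : Type*} (H : Set (V × V)) : Prop :=
  ∃ v : V, Relation.TransGen (fun a b : V => (a, b) ∈ H) v v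

/-- The greedy (Ranked Pairs) edge-selection process: iterate over the list of
edges, adding each edge to the accumulated set `H` unless doing so would create a
directed cycle in `H`. -/
noncomputable def greedy {V : Type*} : List (V × V) → Set (V × V) → Set (V × V)
  | [], H => H
  | e :: rest, H =>
      greedy rest
        (@ite _ (hasCycle (insert e H)) (Classical.propDecidable _) H (insert e H))

lemma greedy_append {V : Type*} (L₁ L₂ : List (V × V)) (H : Set (V × V)) :
    greedy (L₁ ++ L₂) H = greedy L₂ (greedy L₁ H) := by
  induction L₁ generalizing H with
  | nil => rfl
  | cons e rest ih => simp [greedy, ih]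

lemma greedy_mono_mem {V : Type*} (L : List (V × V)) (H : Set (V × V))
    (e : V × V) (he : e ∈ H) : e ∈ greedy L H := by
  induction L generalizing H with
  | nil => exact he
  | cons f rest ih =>
    apply ih
    split
    · exact he
    · exact Set.mem_insert_of_mem _ he

lemma greedy_subset {V : Type*} (L : List (V × V)) (H : Set (V × V)) :
    greedy L H ⊆ H ∪ {e | e ∈ L} := by
  induction L generalizing H with
  | nil => simp [greedy]
  | cons f rest ih =>
    intro e he
    have := ih _ he
    rcases this with h | h
    · split at h
      · exact Or.inl h
      · rcases h with h | h
        · exact Or.inr (by simp [h])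
        · exact Or.inl h
    · exact Or.inr (by simp at h ⊢; tauto)

lemma voteWeight_le_one {V : Type*} {n : ℕ} (hn : 0 < n) (rank : Fin n → V → ℕ)
    (a b : V) : voteWeight n rank a b ≤ 1 := by
  unfold voteWeight
  rw [div_le_one (by exact_mod_cast hn)]
  exact_mod_cast (Finset.card_filter_le _ _).trans_eq (Finset.card_univ.trans (Fintype.card_fin n)).symm.symm

lemma voteWeight_eq_one {V : Type*} {n : ℕ} (hn : 0 < n) (rank : Fin n → V → ℕ)
    {a b : V} (h : 1 ≤ voteWeight n rank a b) : ∀ i, rank i a < rank i b := by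
  have hcard : (Finset.univ.filter (fun i : Fin n => rank i a < rank i b)).card = n := by
    unfold voteWeight at h
    rw [le_div_iff₀ (by exact_mod_cast hn), one_mul] at h
    have h1 : n ≤ (Finset.univ.filter (fun i : Fin n => rank i a < rank i b)).card := by
      exact_mod_cast h
    have h2 := (Finset.card_filter_le Finset.univ (fun i : Fin n => rank i a < rank i b)).trans_eq
      (Finset.card_univ.trans (Fintype.card_fin n))
    omega
  intro i
  have : Finset.univ.filter (fun i : Fin n => rank i a < rank i b) = Finset.univ := by
    apply Finset.eq_univ_of_card
    simpa using hcard
  have := Finset.eq_univ_iff_forall.mp this i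
  simpa using this

lemma no_cycle_of_all {V : Type*} {n : ℕ} (hn : 0 < n) (rank : Fin n → V → ℕ)
    {H : Set (V × V)} (hH : ∀ e ∈ H, ∀ i, rank i e.1 < rank i e.2) :
    ¬ hasCycle H := by
  rintro ⟨v, hv⟩
  have key : ∀ a b : V, Relation.TransGen (fun a b : V => (a, b) ∈ H) a b →
      rank ⟨0, hn⟩ a < rank ⟨0, hn⟩ b := by
    intro a b hab
    induction hab with
    | single h => exact hH _ h _
    | tail _ h ih => exact ih.trans (hH _ h _)
  exact lt_irrefl _ (key v v hv)

/-- Every edge of weight `1` is accepted by Ranked Pairs: if all `n` voters rank `τ`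
before `τ'`, then the Ranked Pairs output order places `τ` before `τ'` (the edge
`(τ, τ')` belongs to the final accepted edge set). -/
theorem weight_one_edge_accepted {V : Type*} [Fintype V] {n : ℕ} (hn : 0 < n)
    (rank : Fin n → V → ℕ) (hinj : ∀ i, Function.Injective (rank i))
    (L : List (V × V))
    (hmemL : ∀ a b : V, a ≠ b → (a, b) ∈ L)
    (hnd : L.Nodup)
    (hirr : ∀ e ∈ L, e.1 ≠ e.2)
    (hsort : L.Pairwise (fun e f => voteWeight n rank f.1 f.2 ≤ voteWeight n rank e.1 e.2))
    (τ τ' : V) (hne : τ ≠ τ')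
    (hall : ∀ i : Fin n, rank i τ < rank i τ') :
    (τ, τ') ∈ greedy L ∅ := by
  obtain ⟨L₁, L₂, rfl⟩ := List.append_of_mem (hmemL τ τ' hne)
  -- weight of (τ, τ') is 1
  have hw : voteWeight n rank τ τ' = 1 := by
    have : Finset.univ.filter (fun i : Fin n => rank i τ < rank i τ') = Finset.univ := by
      apply Finset.filter_true_of_mem; intro i _; exact hall i
    unfold voteWeight
    rw [this]
    simp
    omega
  -- every edge in L₁ has weight ≥ 1, hence all voters agree on it
  have hL₁ : ∀ e ∈ L₁, ∀ i, rank i e.1 < rank i e.2 := by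
    intro e he
    apply voteWeight_eq_one hn rank
    rw [← hw]
    have := (List.pairwise_append.mp hsort).2.2 e he (τ, τ') (by simp)
    exact this
  rw [greedy_append]
  set H₁ := greedy L₁ (∅ : Set (V × V)) with hH₁
  have hsub : H₁ ⊆ {e | e ∈ L₁} := by
    intro e he
    rcases greedy_subset L₁ ∅ he with h | h
    · exact absurd h (by simp)
    · exact h
  have hgood : ∀ e ∈ insert (τ, τ') H₁, ∀ i, rank i e.1 < rank i e.2 := by
    rintro e (rfl | he) i
    · exact hall i
    · exact hL₁ e (hsub he) i
  have hnc : ¬ hasCycle (insert (τ, τ') H₁) := no_cycle_of_all hn rank hgood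
  show (τ, τ') ∈ greedy ((τ, τ') :: L₂) H₁
  rw [greedy, if_neg hnc]
  exact greedy_mono_mem _ _ _ (Set.mem_insert _ _)
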